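/- Let k > 0, p > 0, d ≥ 2, and define F(z) = -d/2 - p z (K_k'(pz) + c I_k'(pz))/(K_k(pz) + c I_k(pz)) for a constant c, where K_k, I_k are modified Bessel functions and primes denote derivatives with respect to the argument pz. Then F satisfies the Riccati equation z F' - F² - d F + p² z² + m² = 0 with m² = k² - d²/4 (equivalently m²L² = Δ(d-Δ) with k = Δ - d/2, L = 1), on any interval where the denominator is nonvanishing. -/

import Mathlib

/-- The function `F(z) = -d/2 - pz (K_k'(pz) + c I_k'(pz))/(K_k(pz) + c I_k(pz))`
built from modified Bessel functions of order `k` (characterized here by the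
modified Bessel equation `x²f'' + xf' - (x² + k²)f = 0`) satisfies the Riccati
equation `z F' - F² - dF + p²z² + m² = 0` with `m² = k² - d²/4`, on any set
where the denominator is nonvanishing. -/
theorem bessel_riccati_AdS (d : ℕ) (hd : 2 ≤ d) (k p c : ℝ)
    (hk : 0 < k) (hp : 0 < p)
    (K I : ℝ → ℝ) (hK : ContDiff ℝ 2 K) (hI : ContDiff ℝ 2 I)
    (hKode : ∀ x > (0:ℝ),
      x ^ 2 * deriv (deriv K) x + x * deriv K x - (x ^ 2 + k ^ 2) * K x = 0)
    (hIode : ∀ x > (0:ℝ),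
      x ^ 2 * deriv (deriv I) x + x * deriv I x - (x ^ 2 + k ^ 2) * I x = 0)
    (S : Set ℝ) (hS : IsOpen S) (hSpos : ∀ z ∈ S, 0 < z)
    (hden : ∀ z ∈ S, K (p * z) + c * I (p * z) ≠ 0)
    (F : ℝ → ℝ)
    (hF : ∀ z, F z = -(d : ℝ) / 2 -
      p * z * (deriv K (p * z) + c * deriv I (p * z)) / (K (p * z) + c * I (p * z))) :
    ∀ z ∈ S, z * deriv F z - (F z) ^ 2 - (d : ℝ) * F z + p ^ 2 * z ^ 2 +
      (k ^ 2 - (d : ℝ) ^ 2 / 4) = 0 := by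
  have hFe : F = fun z => -(d : ℝ) / 2 -
      p * z * (deriv K (p * z) + c * deriv I (p * z)) / (K (p * z) + c * I (p * z)) :=
    funext hF
  subst hFe
  intro z hz
  have hzpos := hSpos z hz
  have hxpos : 0 < p * z := mul_pos hp hzpos
  have hden' := hden z hz
  have hK1 : Differentiable ℝ K := hK.differentiable two_ne_zero
  have hI1 : Differentiable ℝ I := hI.differentiable two_ne_zero
  have hK2 : Differentiable ℝ (deriv K) := by
    have := (contDiff_succ_iff_deriv.mp (show ContDiff ℝ (1+1) K by exact_mod_cast hK)).2.2
    exact this.differentiable one_ne_zero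
  have hI2 : Differentiable ℝ (deriv I) := by
    have := (contDiff_succ_iff_deriv.mp (show ContDiff ℝ (1+1) I by exact_mod_cast hI)).2.2
    exact this.differentiable one_ne_zero
  have hpz : HasDerivAt (fun z : ℝ => p * z) p z := by
    simpa using (hasDerivAt_id z).const_mul p
  have hKc : HasDerivAt (fun z => K (p * z)) (deriv K (p*z) * p) z :=
    ((hK1 (p*z)).hasDerivAt).comp z hpz
  have hIc : HasDerivAt (fun z => I (p * z)) (deriv I (p*z) * p) z :=
    ((hI1 (p*z)).hasDerivAt).comp z hpz
  have hK'c : HasDerivAt (fun z => deriv K (p * z)) (deriv (deriv K) (p*z) * p) z :=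
    ((hK2 (p*z)).hasDerivAt).comp z hpz
  have hI'c : HasDerivAt (fun z => deriv I (p * z)) (deriv (deriv I) (p*z) * p) z :=
    ((hI2 (p*z)).hasDerivAt).comp z hpz
  have hN : HasDerivAt (fun z => p * z * (deriv K (p * z) + c * deriv I (p * z)))
      (p * (deriv K (p*z) + c * deriv I (p*z)) +
        p * z * (deriv (deriv K) (p*z) * p + c * (deriv (deriv I) (p*z) * p))) z :=
    hpz.mul (hK'c.add (hI'c.const_mul c))
  have hD : HasDerivAt (fun z => K (p * z) + c * I (p * z))
      (deriv K (p*z) * p + c * (deriv I (p*z) * p)) z :=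
    hKc.add (hIc.const_mul c)
  have hFd : HasDerivAt (fun z => -(d : ℝ) / 2 -
      p * z * (deriv K (p * z) + c * deriv I (p * z)) / (K (p * z) + c * I (p * z)))
      (-(((p * (deriv K (p*z) + c * deriv I (p*z)) +
        p * z * (deriv (deriv K) (p*z) * p + c * (deriv (deriv I) (p*z) * p))) *
          (K (p*z) + c * I (p*z)) -
        p * z * (deriv K (p * z) + c * deriv I (p * z)) *
          (deriv K (p*z) * p + c * (deriv I (p*z) * p))) / (K (p*z) + c * I (p*z)) ^ 2)) z :=
    (hN.div hD hden').const_sub _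
  rw [hFd.deriv]
  have hcomb : (p*z) ^ 2 * (deriv (deriv K) (p*z) + c * deriv (deriv I) (p*z)) +
      (p*z) * (deriv K (p*z) + c * deriv I (p*z)) -
      ((p*z) ^ 2 + k ^ 2) * (K (p*z) + c * I (p*z)) = 0 := by
    linear_combination hKode (p*z) hxpos + c * hIode (p*z) hxpos
  have hden'' : K (z*p) + c * I (z*p) ≠ 0 := by rwa [mul_comm z p]
  field_simp
  rw [mul_comm p z] at hcomb
  linear_combination (-16 : ℝ) * (K (z*p) + c * I (z*p)) * hcomb
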